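/- Let H ⊆ L be subspaces of ℂ^k, let L̄ = { conj(h) : h ∈ L } and similarly H̄, and let Y : H → L̄ be a ℂ-linear isometry such that the compression P_{H̄} Y : H → H̄ is symmetric (i.e., hᵀ(Yg) = gᵀ(Yh) for all g, h ∈ H, identifying vectors with their coordinates). Then there exists a ℂ-linear map Ỹ : L → L̄ that is unitary, symmetric (hᵀ(Ỹg) = gᵀ(Ỹh) for all g, h ∈ L), and extends Y (Ỹ|_H = Y). -/

import Mathlib

open Finset

noncomputable section

variable {k : ℕ}

lemma real_inner_re (x y : EuclideanSpace ℂ (Fin k)) :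
    (inner ℝ x y : ℝ) = (inner ℂ x y : ℂ).re := by
  simp [PiLp.inner_apply, Complex.re_sum]

lemma stmt19_lemA (L : Submodule ℂ (EuclideanSpace ℂ (Fin k))) (S : Submodule ℝ (EuclideanSpace ℂ (Fin k)))
    (hSL : ∀ a ∈ S, a ∈ L)
    (hreal : ∀ a ∈ S, ∀ b ∈ S, (inner ℂ a b : ℂ).im = 0) :
    ∃ (ι : Type) (_ : Fintype ι) (u : ι → EuclideanSpace ℂ (Fin k)),
      Orthonormal ℂ u ∧ (∀ j, u j ∈ L) ∧
      Submodule.span ℂ (Set.range u) = L ∧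
      S ≤ Submodule.span ℝ (Set.range u) := by
  haveI : FiniteDimensional ℝ (EuclideanSpace ℂ (Fin k)) := Module.Finite.trans ℂ _
  set b := stdOrthonormalBasis ℝ S with hb
  set v : Fin (Module.finrank ℝ S) → EuclideanSpace ℂ (Fin k) := fun j => (b j : EuclideanSpace ℂ (Fin k)) with hv
  have hvS : ∀ j, v j ∈ S := fun j => (b j).2
  have hvon : Orthonormal ℂ v := by
    rw [orthonormal_iff_ite]
    intro i j
    have h1 : (inner ℂ (v i) (v j) : ℂ).re = if i = j then 1 else 0 := by
      rw [← real_inner_re]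
      have := orthonormal_iff_ite.mp b.orthonormal i j
      rw [Submodule.coe_inner] at this
      simpa using this
    have h2 := hreal _ (hvS i) _ (hvS j)
    rcases eq_or_ne i j with rfl | hij
    · apply Complex.ext
      · simpa using h1
      · simpa using h2
    · apply Complex.ext
      · simpa [hij] using h1
      · simpa [hij] using h2
  have hSv : S ≤ Submodule.span ℝ (Set.range v) := by
    intro a ha
    have := b.sum_repr ⟨a, ha⟩
    have : a = ∑ j, (b.repr ⟨a, ha⟩ j : ℝ) • v j := by
      conv_lhs => rw [show a = ((⟨a, ha⟩ : S) : EuclideanSpace ℂ (Fin k)) from rfl, ← this]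
      push_cast [Submodule.coe_sum]
      rfl
    rw [this]
    exact Submodule.sum_mem _ fun j _ => Submodule.smul_mem _ _ (Submodule.subset_span ⟨j, rfl⟩)
  set M := Submodule.span ℂ (Set.range v) with hM
  have hML : M ≤ L := Submodule.span_le.mpr (by rintro _ ⟨j, rfl⟩; exact hSL _ (hvS j))
  set K := Mᗮ ⊓ L with hK
  set b2 := stdOrthonormalBasis ℂ K with hb2
  set w : Fin (Module.finrank ℂ K) → EuclideanSpace ℂ (Fin k) := fun j => (b2 j : EuclideanSpace ℂ (Fin k)) with hw
  have hwK : ∀ j, w j ∈ K := fun j => (b2 j).2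
  have hvw : ∀ i j, (inner ℂ (v i) (w j) : ℂ) = 0 := by
    intro i j
    exact (Submodule.mem_orthogonal M (w j)).mp (hwK j).1 (v i) (Submodule.subset_span ⟨i, rfl⟩)
  refine ⟨_ ⊕ _, inferInstance, Sum.elim v w, ?_, ?_, ?_, ?_⟩
  · rw [orthonormal_iff_ite]
    rintro (i | i) (j | j)
    · simpa using orthonormal_iff_ite.mp hvon i j
    · simpa using hvw i j
    · simpa using inner_eq_zero_symm.mp (hvw j i)
    · have := orthonormal_iff_ite.mp b2.orthonormal i j
      rw [Submodule.coe_inner] at this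
      simpa using this
  · rintro (j | j)
    · exact hSL _ (hvS j)
    · exact (hwK j).2
  · have hspw : Submodule.span ℂ (Set.range w) = K := by
      have h2 : Set.range w = K.subtype '' Set.range ⇑b2.toBasis := by
        rw [OrthonormalBasis.coe_toBasis, ← Set.range_comp]
        rfl
      rw [h2, ← Submodule.map_span, b2.toBasis.span_eq, Submodule.map_subtype_top]
    rw [Set.Sum.elim_range, Submodule.span_union, hspw]
    apply le_antisymm
    · exact sup_le hML inf_le_right
    · intro x hx
      have hp : (M.orthogonalProjection x : EuclideanSpace ℂ (Fin k)) ∈ M := (M.orthogonalProjection x).2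
      have hq : x - M.orthogonalProjection x ∈ Mᗮ := Submodule.sub_starProjection_mem_orthogonal (K := M) x
      have hqL : x - M.orthogonalProjection x ∈ L := Submodule.sub_mem L hx (hML hp)
      have : x = ↑(M.orthogonalProjection x) + (x - ↑(M.orthogonalProjection x)) := by abel
      rw [this]
      exact Submodule.add_mem _ (Submodule.mem_sup_left hp) (Submodule.mem_sup_right ⟨hq, hqL⟩)
  · refine hSv.trans (Submodule.span_mono ?_)
    rw [Set.Sum.elim_range]
    exact Set.subset_union_left

set_option maxHeartbeats 1000000 in
theorem stmt19 (k : ℕ) (H L : Submodule ℂ (Fin k → ℂ)) (hHL : H ≤ L)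
    (Y : (Fin k → ℂ) →ₗ[ℂ] (Fin k → ℂ))
    -- Y maps H into the conjugate of L
    (hYrange : ∀ h ∈ H, (fun i => star (Y h i)) ∈ L)
    -- Y is an isometry on H
    (hYiso : ∀ h ∈ H, ∑ i, Complex.normSq (Y h i) = ∑ i, Complex.normSq (h i))
    -- the compression of Y to the conjugate of H is symmetric
    (hYsym : ∀ g ∈ H, ∀ h ∈ H, ∑ i, h i * Y g i = ∑ i, g i * Y h i) :
    ∃ Z : (Fin k → ℂ) →ₗ[ℂ] (Fin k → ℂ),
      -- Z maps L into the conjugate of L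
      (∀ x ∈ L, (fun i => star (Z x i)) ∈ L) ∧
      -- Z is an isometry on L
      (∀ x ∈ L, ∑ i, Complex.normSq (Z x i) = ∑ i, Complex.normSq (x i)) ∧
      -- Z maps L onto the conjugate of L
      (∀ w : Fin k → ℂ, (fun i => star (w i)) ∈ L → ∃ x ∈ L, Z x = w) ∧
      -- Z is symmetric on L
      (∀ g ∈ L, ∀ h ∈ L, ∑ i, h i * Z g i = ∑ i, g i * Z h i) ∧
      -- Z extends Y
      (∀ h ∈ H, Z h = Y h) := by
  classical
  let toE : (Fin k → ℂ) → EuclideanSpace ℂ (Fin k) := fun x => WithLp.toLp 2 x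
  let L' : Submodule ℂ (EuclideanSpace ℂ (Fin k)) :=
    L.comap (WithLp.linearEquiv 2 ℂ (Fin k → ℂ)).toLinearMap
  -- conjugation
  let T : (Fin k → ℂ) → (Fin k → ℂ) := fun x => fun i => star (x i)
  -- real smul vs complex smul
  have hrs : ∀ (r : ℝ) (x : EuclideanSpace ℂ (Fin k)), r • x = ((r : ℂ)) • x := by
    intro r x
    ext i
    exact Complex.real_smul
  -- inner ℂ products as sums
  have hinner : ∀ x y : EuclideanSpace ℂ (Fin k),
      (inner ℂ x y : ℂ) = ∑ i, (starRingEnd ℂ) (x i) * y i := by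
    intro x y
    simp [PiLp.inner_apply, RCLike.inner_apply, mul_comm]
  -- norms
  have hnorm : ∀ y : EuclideanSpace ℂ (Fin k), ‖y‖ = Real.sqrt (∑ i, Complex.normSq (y i)) := by
    intro y
    rw [EuclideanSpace.norm_eq]
    congr 1
    refine Finset.sum_congr rfl fun i _ => ?_
    rw [← Complex.sq_norm]
  have hYnorm : ∀ x ∈ H, ‖toE (Y x)‖ = ‖toE x‖ := by
    intro x hx
    rw [hnorm, hnorm]
    exact congrArg Real.sqrt (hYiso _ hx)
  -- Y preserves inner ℂ products on H
  have hYinner : ∀ g ∈ H, ∀ h ∈ H,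
      (inner ℂ (toE (Y g)) (toE (Y h)) : ℂ) = inner ℂ (toE g) (toE h) := by
    intro g hg h hh
    rw [inner_eq_sum_norm_sq_div_four, inner_eq_sum_norm_sq_div_four]
    have n1 : ‖toE (Y g) + toE (Y h)‖ = ‖toE g + toE h‖ := by
      have e : toE (Y g) + toE (Y h) = toE (Y (g + h)) := by rw [map_add]; rfl
      rw [e, show toE g + toE h = toE (g + h) from rfl]
      exact hYnorm _ (H.add_mem hg hh)
    have n2 : ‖toE (Y g) - toE (Y h)‖ = ‖toE g - toE h‖ := by
      have e : toE (Y g) - toE (Y h) = toE (Y (g - h)) := by rw [map_sub]; rfl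
      rw [e, show toE g - toE h = toE (g - h) from rfl]
      exact hYnorm _ (H.sub_mem hg hh)
    have n3 : ‖toE (Y g) - (RCLike.I : ℂ) • toE (Y h)‖ = ‖toE g - (RCLike.I : ℂ) • toE h‖ := by
      have e : toE (Y g) - (RCLike.I : ℂ) • toE (Y h) = toE (Y (g - Complex.I • h)) := by
        rw [map_sub, map_smul]; rfl
      rw [e, show toE g - (RCLike.I : ℂ) • toE h = toE (g - Complex.I • h) from rfl]
      exact hYnorm _ (H.sub_mem hg (H.smul_mem _ hh))
    have n4 : ‖toE (Y g) + (RCLike.I : ℂ) • toE (Y h)‖ = ‖toE g + (RCLike.I : ℂ) • toE h‖ := by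
      have e : toE (Y g) + (RCLike.I : ℂ) • toE (Y h) = toE (Y (g + Complex.I • h)) := by
        rw [map_add, map_smul]; rfl
      rw [e, show toE g + (RCLike.I : ℂ) • toE h = toE (g + Complex.I • h) from rfl]
      exact hYnorm _ (H.add_mem hg (H.smul_mem _ hh))
    rw [n1, n2, n3, n4]
  -- base inner ℂ product identities
  have i2 : ∀ g h : Fin k → ℂ, (inner ℂ (toE (T (Y g))) (toE h) : ℂ) = ∑ i, h i * Y g i := by
    intro g h
    rw [hinner]
    refine Finset.sum_congr rfl fun i _ => ?_
    simp [T, toE, mul_comm]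
  have i3 : ∀ g ∈ H, ∀ h ∈ H,
      (inner ℂ (toE g) (toE (T (Y h))) : ℂ) = (starRingEnd ℂ) (∑ i, h i * Y g i) := by
    intro g hg h hh
    rw [hinner, hYsym g hg h hh, map_sum]
    refine Finset.sum_congr rfl fun i _ => ?_
    simp [T, toE]
  have i4 : ∀ g ∈ H, ∀ h ∈ H,
      (inner ℂ (toE (T (Y g))) (toE (T (Y h))) : ℂ) = (starRingEnd ℂ) (inner ℂ (toE g) (toE h) : ℂ) := by
    intro g hg h hh
    rw [← hYinner g hg h hh, hinner, hinner, map_sum]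
    refine Finset.sum_congr rfl fun i _ => ?_
    simp [T, toE, mul_comm]
  -- the generating set
  let G : Set (EuclideanSpace ℂ (Fin k)) :=
    {x | ∃ h ∈ H, x = toE (h + T (Y h))} ∪ {x | ∃ h ∈ H, x = Complex.I • toE (h - T (Y h))}
  let S : Submodule ℝ (EuclideanSpace ℂ (Fin k)) := Submodule.span ℝ G
  have hGL : ∀ a ∈ G, a ∈ L' := by
    rintro a (⟨h, hh, rfl⟩ | ⟨h, hh, rfl⟩)
    · exact Submodule.add_mem L (hHL hh) (hYrange h hh)
    · exact Submodule.smul_mem L' _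
        (show toE (h - T (Y h)) ∈ L' from Submodule.sub_mem L (hHL hh) (hYrange h hh))
  have hSL : ∀ a ∈ S, a ∈ L' := by
    intro a ha
    refine Submodule.span_induction (p := fun a _ => a ∈ L') (fun x hx => hGL x hx)
      (Submodule.zero_mem L') (fun x y _ _ hx hy => Submodule.add_mem L' hx hy)
      (fun r x _ hx => ?_) ha
    show r • x ∈ L'
    rw [hrs]
    exact Submodule.smul_mem L' _ hx
  -- the real structure
  have hGreal : ∀ a ∈ G, ∀ b ∈ G, (inner ℂ a b : ℂ).im = 0 := by
    rintro a (⟨g, hg, rfl⟩ | ⟨g, hg, rfl⟩) b (⟨h, hh, rfl⟩ | ⟨h, hh, rfl⟩)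
    · rw [show toE (g + T (Y g)) = toE g + toE (T (Y g)) from rfl,
          show toE (h + T (Y h)) = toE h + toE (T (Y h)) from rfl,
          inner_add_left, inner_add_right, inner_add_right,
          i2 g h, i3 g hg h hh, i4 g hg h hh]
      simp only [Complex.add_im, Complex.conj_im]
      ring
    · rw [show toE (g + T (Y g)) = toE g + toE (T (Y g)) from rfl,
          show toE (h - T (Y h)) = toE h - toE (T (Y h)) from rfl,
          inner_smul_right, inner_add_left, inner_sub_right, inner_sub_right,
          i2 g h, i3 g hg h hh, i4 g hg h hh]
      simp only [Complex.mul_im, Complex.mul_re, Complex.add_im, Complex.add_re,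
        Complex.sub_im, Complex.sub_re, Complex.conj_im, Complex.conj_re,
        Complex.I_re, Complex.I_im]
      ring
    · rw [show toE (g - T (Y g)) = toE g - toE (T (Y g)) from rfl,
          show toE (h + T (Y h)) = toE h + toE (T (Y h)) from rfl,
          inner_smul_left, inner_sub_left, inner_add_right, inner_add_right,
          i2 g h, i3 g hg h hh, i4 g hg h hh, Complex.conj_I]
      simp only [Complex.mul_im, Complex.mul_re, Complex.add_im, Complex.add_re,
        Complex.sub_im, Complex.sub_re, Complex.conj_im, Complex.conj_re,
        Complex.I_re, Complex.I_im, Complex.neg_im, Complex.neg_re]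
      ring
    · rw [show toE (g - T (Y g)) = toE g - toE (T (Y g)) from rfl,
          show toE (h - T (Y h)) = toE h - toE (T (Y h)) from rfl,
          inner_smul_left, inner_smul_right, inner_sub_left, inner_sub_right, inner_sub_right,
          i2 g h, i3 g hg h hh, i4 g hg h hh, Complex.conj_I]
      simp only [Complex.mul_im, Complex.mul_re, Complex.add_im, Complex.add_re,
        Complex.sub_im, Complex.sub_re, Complex.conj_im, Complex.conj_re,
        Complex.I_re, Complex.I_im, Complex.neg_im, Complex.neg_re]
      ring
  have hSreal1 : ∀ b ∈ G, ∀ a ∈ S, (inner ℂ a b : ℂ).im = 0 := by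
    intro b hb a ha
    refine Submodule.span_induction (p := fun a _ => (inner ℂ a b : ℂ).im = 0)
      (fun x hx => hGreal x hx b hb) ?_ ?_ ?_ ha
    · simp
    · intro x y _ _ hx hy
      rw [inner_add_left, Complex.add_im, hx, hy, add_zero]
    · intro r x _ hx
      show (inner ℂ ((r : ℝ) • x) b : ℂ).im = 0
      rw [hrs, inner_smul_left]
      simp only [Complex.conj_ofReal, Complex.mul_im, Complex.ofReal_re, Complex.ofReal_im, hx]
      ring
  have hSreal : ∀ a ∈ S, ∀ b ∈ S, (inner ℂ a b : ℂ).im = 0 := by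
    intro a ha b hb
    refine Submodule.span_induction (p := fun b _ => (inner ℂ a b : ℂ).im = 0)
      (fun x hx => hSreal1 x hx a ha) ?_ ?_ ?_ hb
    · simp
    · intro x y _ _ hx hy
      rw [inner_add_right, Complex.add_im, hx, hy, add_zero]
    · intro r x _ hx
      show (inner ℂ a ((r : ℝ) • x) : ℂ).im = 0
      rw [hrs, inner_smul_right]
      simp only [Complex.mul_im, Complex.ofReal_re, Complex.ofReal_im, hx]
      ring
  -- get the orthonormal family
  obtain ⟨ι, _, u, huon, huL, huspan, hSspan⟩ := stmt19_lemA L' S hSL hSreal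
  -- the conjugated family
  let c : ι → (Fin k → ℂ) := fun j => fun i => star (u j i)
  -- the linear map
  let Z : (Fin k → ℂ) →ₗ[ℂ] (Fin k → ℂ) :=
    { toFun := fun x => ∑ j, (inner ℂ (u j) (toE x) : ℂ) • c j
      map_add' := by
        intro x y
        show ∑ j, (inner ℂ (u j) (toE x + toE y) : ℂ) • c j = _
        simp only [inner_add_right, add_smul]
        rw [Finset.sum_add_distrib]
      map_smul' := by
        intro m x
        show ∑ j, (inner ℂ (u j) (m • toE x) : ℂ) • c j = _
        simp only [inner_smul_right, RingHom.id_apply, mul_smul]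
        rw [← Finset.smul_sum] }
  have hZdef : ∀ x : Fin k → ℂ, Z x = ∑ j, (inner ℂ (u j) (toE x) : ℂ) • c j := fun x => rfl
  have hZapp : ∀ (x : Fin k → ℂ) (i : Fin k),
      Z x i = ∑ j, (inner ℂ (u j) (toE x) : ℂ) * star (u j i) := by
    intro x i
    rw [hZdef]
    rw [Finset.sum_apply]
    rfl
  -- expansion of elements of L
  have hexp : ∀ x : Fin k → ℂ, x ∈ L → toE x = ∑ j, (inner ℂ (u j) (toE x) : ℂ) • u j := by
    intro x hx
    have hx' : toE x ∈ Submodule.span ℂ (Set.range u) := by rw [huspan]; exact hx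
    obtain ⟨d, hd⟩ := (Submodule.mem_span_range_iff_exists_fun ℂ).mp hx'
    have hcoef : ∀ i, (inner ℂ (u i) (toE x) : ℂ) = d i := by
      intro i
      rw [← hd]
      exact huon.inner_right_fintype d i
    rw [show (∑ j, (inner ℂ (u j) (toE x) : ℂ) • u j) = ∑ j, d j • u j from
      Finset.sum_congr rfl fun j _ => by rw [hcoef j]]
    exact hd.symm
  -- Parseval-type identity
  have happ : ∀ (d : ι → ℂ) (i : Fin k),
      (∑ j, d j • u j : EuclideanSpace ℂ (Fin k)) i = ∑ j, d j * u j i := by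
    intro d i
    rw [WithLp.ofLp_sum, Finset.sum_apply]
    rfl
  have hpars : ∀ d : ι → ℂ,
      ∑ i, Complex.normSq ((∑ j, d j • u j : EuclideanSpace ℂ (Fin k)) i)
        = ∑ j, Complex.normSq (d j) := by
    intro d
    set y : EuclideanSpace ℂ (Fin k) := ∑ j, d j • u j with hy
    have h1 : (inner ℂ y y : ℂ) = ∑ j, (starRingEnd ℂ) (d j) * d j := by
      rw [hy, sum_inner]
      refine Finset.sum_congr rfl fun j _ => ?_
      rw [inner_smul_left, huon.inner_right_fintype d j]
    have h2 : (inner ℂ y y : ℂ) = ∑ i, (Complex.normSq (y i) : ℂ) := by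
      rw [hinner]
      refine Finset.sum_congr rfl fun i _ => ?_
      rw [Complex.normSq_eq_conj_mul_self]
    have h3 : (∑ i, (Complex.normSq (y i) : ℂ)) = ∑ j, (Complex.normSq (d j) : ℂ) := by
      rw [← h2, h1]
      refine Finset.sum_congr rfl fun j _ => ?_
      rw [Complex.normSq_eq_conj_mul_self]
    exact_mod_cast h3
  refine ⟨Z, ?_, ?_, ?_, ?_, ?_⟩
  -- (a) maps L into conj L
  · intro x hx
    have hx' : (fun i => star (Z x i))
        = (∑ j, (starRingEnd ℂ) (inner ℂ (u j) (toE x) : ℂ) • u j : EuclideanSpace ℂ (Fin k)) := by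
      funext i
      rw [show (∑ j, (starRingEnd ℂ) (inner ℂ (u j) (toE x) : ℂ) • u j
            : EuclideanSpace ℂ (Fin k)) i
          = ∑ j, (starRingEnd ℂ) (inner ℂ (u j) (toE x) : ℂ) * u j i from happ _ i]
      rw [hZapp, star_sum]
      refine Finset.sum_congr rfl fun j _ => ?_
      simp only [Complex.star_def, map_mul, Complex.conj_conj]
    rw [hx']
    exact Submodule.sum_mem L' fun j _ => Submodule.smul_mem L' _ (huL j)
  -- (b) isometry on L
  · intro x hx
    have h1 : ∀ i, Z x i
        = star ((∑ j, (starRingEnd ℂ) ((inner ℂ (u j) (toE x) : ℂ)) • u j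
            : EuclideanSpace ℂ (Fin k)) i) := by
      intro i
      rw [show (∑ j, (starRingEnd ℂ) (inner ℂ (u j) (toE x) : ℂ) • u j
            : EuclideanSpace ℂ (Fin k)) i
          = ∑ j, (starRingEnd ℂ) (inner ℂ (u j) (toE x) : ℂ) * u j i from happ _ i]
      rw [hZapp, star_sum]
      refine Finset.sum_congr rfl fun j _ => ?_
      simp only [Complex.star_def, map_mul, Complex.conj_conj]
    calc ∑ i, Complex.normSq (Z x i)
        = ∑ i, Complex.normSq ((∑ j, (starRingEnd ℂ) ((inner ℂ (u j) (toE x) : ℂ)) • u j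
            : EuclideanSpace ℂ (Fin k)) i) := by
          refine Finset.sum_congr rfl fun i _ => ?_
          rw [h1 i, Complex.star_def, Complex.normSq_conj]
      _ = ∑ j, Complex.normSq ((starRingEnd ℂ) ((inner ℂ (u j) (toE x) : ℂ))) := hpars _
      _ = ∑ j, Complex.normSq ((inner ℂ (u j) (toE x) : ℂ)) := by
          refine Finset.sum_congr rfl fun j _ => ?_
          exact Complex.normSq_conj _
      _ = ∑ i, Complex.normSq (x i) := by
          have h2 := hpars (fun j => (inner ℂ (u j) (toE x) : ℂ))
          rw [← hexp x hx] at h2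
          exact h2.symm
  -- (c) onto conj L
  · intro w hw
    set cw : Fin k → ℂ := fun i => star (w i) with hcw
    set e : ι → ℂ := fun j => (inner ℂ (u j) (toE cw) : ℂ) with he
    set x : EuclideanSpace ℂ (Fin k) := ∑ j, (starRingEnd ℂ) (e j) • u j with hxdef
    refine ⟨x, Submodule.sum_mem L' (fun j _ => Submodule.smul_mem L' _ (huL j)), ?_⟩
    funext i
    rw [hZapp]
    have hcoj : ∀ jj, (inner ℂ (u jj) (toE x) : ℂ) = (starRingEnd ℂ) (e jj) :=
      fun jj => huon.inner_right_fintype _ jj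
    have hwex : toE cw = (∑ j, e j • u j : EuclideanSpace ℂ (Fin k)) := hexp cw hw
    have hwi : w i = star ((toE cw) i) := by simp [hcw, toE]
    rw [show ∑ j, (inner ℂ (u j) (toE x) : ℂ) * star (u j i)
        = ∑ j, (starRingEnd ℂ) (e j) * star (u j i) from
      Finset.sum_congr rfl fun j _ => by rw [hcoj j], hwi, hwex]
    rw [show (∑ j, e j • u j : EuclideanSpace ℂ (Fin k)) i = ∑ j, e j * u j i from happ _ i,
      star_sum]
    refine Finset.sum_congr rfl fun j _ => ?_
    simp only [Complex.star_def, map_mul, Complex.conj_conj]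
  -- (d) symmetry
  · intro g _ h _
    have key : ∀ g h : Fin k → ℂ, ∑ i, h i * Z g i
        = ∑ j, (inner ℂ (u j) (toE g) : ℂ) * (inner ℂ (u j) (toE h) : ℂ) := by
      intro g h
      calc ∑ i, h i * Z g i
          = ∑ i, ∑ j, (inner ℂ (u j) (toE g) : ℂ) * (h i * star (u j i)) := by
            refine Finset.sum_congr rfl fun i _ => ?_
            rw [hZapp, Finset.mul_sum]
            exact Finset.sum_congr rfl fun j _ => by ring
        _ = ∑ j, ∑ i, (inner ℂ (u j) (toE g) : ℂ) * (h i * star (u j i)) := Finset.sum_comm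
        _ = ∑ j, (inner ℂ (u j) (toE g) : ℂ) * (inner ℂ (u j) (toE h) : ℂ) := by
            refine Finset.sum_congr rfl fun j _ => ?_
            rw [← Finset.mul_sum]
            congr 1
    rw [key g h, key h g]
    exact Finset.sum_congr rfl fun j _ => by ring
  -- (e) extends Y
  · intro h hh
    have ha1 : toE (h + T (Y h)) ∈ Submodule.span ℝ (Set.range u) :=
      hSspan (Submodule.subset_span (Or.inl ⟨h, hh, rfl⟩))
    have hb1 : Complex.I • toE (h - T (Y h)) ∈ Submodule.span ℝ (Set.range u) :=
      hSspan (Submodule.subset_span (Or.inr ⟨h, hh, rfl⟩))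
    have hfix : ∀ y : EuclideanSpace ℂ (Fin k), y ∈ Submodule.span ℝ (Set.range u) →
        ∀ i, star (Z y i) = y i := by
      intro y hy i
      obtain ⟨r, hr⟩ := (Submodule.mem_span_range_iff_exists_fun ℝ).mp hy
      have hry : toE y = ∑ j, ((r j : ℂ)) • u j := by
        rw [← hr]
        exact Finset.sum_congr rfl fun j _ => (hrs (r j) (u j))
      rw [hZapp, star_sum]
      have hyi : y i = (toE y) i := rfl
      rw [hyi, hry]
      rw [show (∑ j, ((r j : ℂ)) • u j : EuclideanSpace ℂ (Fin k)) i
          = ∑ j, ((r j : ℂ)) * u j i from happ _ i]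
      refine Finset.sum_congr rfl fun j _ => ?_
      simp only [Complex.star_def, map_mul, Complex.conj_conj]
      rw [huon.inner_right_fintype (fun x => ((r x : ℝ) : ℂ)) j, Complex.conj_ofReal]
    have E1 : ∀ i, (starRingEnd ℂ) (Z h i) + (starRingEnd ℂ) (Z (T (Y h)) i)
        = h i + (starRingEnd ℂ) (Y h i) := by
      intro i
      have h0 := hfix _ ha1 i
      have hZa : Z (toE (h + T (Y h))) = Z h + Z (T (Y h)) := by
        rw [← map_add]
      rw [hZa] at h0
      have h0' : star (Z h i + Z (T (Y h)) i) = h i + star (Y h i) := h0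
      rw [star_add] at h0'
      exact h0'
    have E2 : ∀ i, Complex.I * ((starRingEnd ℂ) (Z h i) - (starRingEnd ℂ) (Z (T (Y h)) i))
        = Complex.I * ((starRingEnd ℂ) (Y h i) - h i) := by
      intro i
      have h0 := hfix _ hb1 i
      have hZb : Z (WithLp.ofLp (Complex.I • toE (h - T (Y h)))) = Complex.I • (Z h - Z (T (Y h))) := by
        rw [← map_sub, ← map_smul]; rfl
      rw [hZb] at h0
      have h0' : star (Complex.I * (Z h i - Z (T (Y h)) i))
          = Complex.I * (h i - star (Y h i)) := h0
      simp only [Complex.star_def, map_mul, map_sub, Complex.conj_I] at h0'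
      linear_combination -h0'
    funext i
    have e1 := E1 i
    have e2 := E2 i
    have key : (starRingEnd ℂ) (Z h i) = (starRingEnd ℂ) (Y h i) := by
      have e2' : (starRingEnd ℂ) (Z h i) - (starRingEnd ℂ) (Z (T (Y h)) i)
          = (starRingEnd ℂ) (Y h i) - h i := mul_left_cancel₀ Complex.I_ne_zero e2
      linear_combination (e1 + e2') / 2
    have hkey := congrArg (starRingEnd ℂ) key
    simpa [Complex.conj_conj] using hkey
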